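/- arXiv:2507.17470 — 4 statements merged into one kernel-verified Lean document; each statement's English description precedes it below -/
import Mathlib

section
/- For positive integers a > b and a real number x with 0 < x ≤ b/a, the partial binomial sum satisfies ∑_{i=b}^{a} C(a,i) x^i ≤ (e·a·x/b)^b, where e is Euler's number. -/
theorem binomial_tail_bound (a b : ℕ) (hb : 0 < b) (hab : b < a) (x : ℝ) (hx : 0 < x)
    (hxb : x ≤ (b : ℝ) / a) :
    ∑ i ∈ Finset.Icc b a, (a.choose i : ℝ) * x ^ i ≤
      (Real.exp 1 * a * x / b) ^ b := by
  have ha : 0 < (a : ℝ) := by exact_mod_cast (show 0 < a by omega)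
  have hbR : 0 < (b : ℝ) := by exact_mod_cast hb
  set t : ℝ := (b : ℝ) / a with ht
  have htpos : 0 < t := by positivity
  have step1 : ∑ i ∈ Finset.Icc b a, (a.choose i : ℝ) * x ^ i ≤
      (x / t) ^ b * ∑ i ∈ Finset.Icc b a, (a.choose i : ℝ) * t ^ i := by
    rw [Finset.mul_sum]
    apply Finset.sum_le_sum
    intro i hi
    simp only [Finset.mem_Icc] at hi
    have h1 : x ^ i = x ^ b * x ^ (i - b) := by rw [← pow_add]; congr 1; omega
    have h2 : t ^ i = t ^ b * t ^ (i - b) := by rw [← pow_add]; congr 1; omega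
    have h3 : x ^ (i - b) ≤ t ^ (i - b) := pow_le_pow_left₀ hx.le hxb _
    calc (a.choose i : ℝ) * x ^ i = (a.choose i : ℝ) * (x ^ b * x ^ (i - b)) := by rw [h1]
      _ ≤ (a.choose i : ℝ) * (x ^ b * t ^ (i - b)) := by
          apply mul_le_mul_of_nonneg_left _ (by positivity)
          exact mul_le_mul_of_nonneg_left h3 (by positivity)
      _ = (x / t) ^ b * ((a.choose i : ℝ) * t ^ i) := by
          rw [h2, div_pow]; field_simp; rw [mul_assoc, ← mul_pow, div_mul_cancel₀ x htpos.ne']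
  have step2 : ∑ i ∈ Finset.Icc b a, (a.choose i : ℝ) * t ^ i ≤
      ∑ i ∈ Finset.range (a + 1), (a.choose i : ℝ) * t ^ i := by
    apply Finset.sum_le_sum_of_subset_of_nonneg
    · intro i hi
      simp only [Finset.mem_Icc] at hi
      simp only [Finset.mem_range]
      omega
    · intro i _ _
      positivity
  have step3 : ∑ i ∈ Finset.range (a + 1), (a.choose i : ℝ) * t ^ i = (1 + t) ^ a := by
    have : (1 + t) ^ a = (t + 1) ^ a := by ring
    rw [this, add_pow]
    apply Finset.sum_congr rfl
    intro i _
    simp [mul_comm]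
  have step4 : (1 + t) ^ a ≤ Real.exp 1 ^ b := by
    have h1 : (1 + t) ^ a ≤ Real.exp t ^ a := by
      apply pow_le_pow_left₀ (by positivity)
      linarith [Real.add_one_le_exp t]
    have hat : (a : ℝ) * t = b := by rw [ht]; field_simp
    have h2 : Real.exp t ^ a = Real.exp 1 ^ b := by
      rw [← Real.exp_nat_mul, ← Real.exp_nat_mul, hat, mul_one]
    linarith
  calc ∑ i ∈ Finset.Icc b a, (a.choose i : ℝ) * x ^ i
      ≤ (x / t) ^ b * (1 + t) ^ a := by
        rw [← step3]
        refine le_trans step1 ?_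
        apply mul_le_mul_of_nonneg_left step2 (by positivity)
    _ ≤ (x / t) ^ b * Real.exp 1 ^ b := by
        apply mul_le_mul_of_nonneg_left step4 (by positivity)
    _ = (Real.exp 1 * a * x / b) ^ b := by
        rw [← mul_pow]
        congr 1
        rw [ht]
        field_simp
end

section
/- For positive integers a > b and reals x, q > 0 satisfying q(1+x) ≤ b/a, the double binomial sum satisfies ∑_{i=b}^{a} ∑_{j=0}^{i} C(a,i) C(i,j) x^j q^i ≤ (e·a·q·(1+x)/b)^b. -/
open Finset

theorem double_binomial_bound (a b : ℕ) (hb : 0 < b) (hab : b < a) (x q : ℝ)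
    (hx : 0 < x) (hq : 0 < q) (h : q * (1 + x) ≤ (b : ℝ) / a) :
    ∑ i ∈ Finset.Icc b a, ∑ j ∈ Finset.range (i + 1),
        (a.choose i : ℝ) * (i.choose j : ℝ) * x ^ j * q ^ i ≤
      (Real.exp 1 * a * q * (1 + x) / b) ^ b := by
  have ha0 : 0 < a := hb.trans hab
  have ha : (0:ℝ) < a := by exact_mod_cast ha0
  have hbR : (0:ℝ) < b := by exact_mod_cast hb
  set t : ℝ := q * (1 + x) with ht_def
  have ht : 0 < t := by positivity
  set s : ℝ := b / (a * t) with hs_def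
  have hs0 : 0 < s := by positivity
  have hat : a * t ≤ b := by
    have := mul_le_mul_of_nonneg_left h ha.le
    calc (a:ℝ) * t ≤ a * ((b:ℝ)/a) := this
    _ = b := by field_simp
  have hs1 : 1 ≤ s := (one_le_div (by positivity)).2 hat
  -- inner sum
  have inner : ∀ i ∈ Icc b a, (∑ j ∈ range (i+1),
      (a.choose i : ℝ) * (i.choose j : ℝ) * x ^ j * q ^ i) = (a.choose i : ℝ) * t ^ i := by
    intro i _
    have hb1 : (∑ j ∈ range (i+1), (a.choose i : ℝ) * (i.choose j : ℝ) * x ^ j * q ^ i)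
        = (a.choose i : ℝ) * q ^ i * ∑ j ∈ range (i+1), x ^ j * 1 ^ (i - j) * (i.choose j : ℝ) := by
      rw [mul_sum]
      exact sum_congr rfl fun j _ => by ring
    rw [hb1, ← add_pow, ht_def, mul_pow]
    ring
  rw [sum_congr rfl inner]
  -- key inequality
  have key : (∑ i ∈ Icc b a, (a.choose i : ℝ) * t ^ i) * s ^ b ≤ Real.exp 1 ^ b := by
    have step1 : (∑ i ∈ Icc b a, (a.choose i : ℝ) * t ^ i) * s ^ b
        ≤ ∑ i ∈ Icc b a, (a.choose i : ℝ) * (t * s) ^ i := by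
      rw [sum_mul]
      refine sum_le_sum fun i hi => ?_
      have hbi : b ≤ i := (mem_Icc.1 hi).1
      have : s ^ b ≤ s ^ i := pow_le_pow_right₀ hs1 hbi
      calc (a.choose i : ℝ) * t ^ i * s ^ b ≤ (a.choose i : ℝ) * t ^ i * s ^ i := by
            apply mul_le_mul_of_nonneg_left this (by positivity)
        _ = (a.choose i : ℝ) * (t * s) ^ i := by rw [mul_assoc, ← mul_pow]
    have step2 : ∑ i ∈ Icc b a, (a.choose i : ℝ) * (t * s) ^ i
        ≤ ∑ i ∈ range (a+1), (a.choose i : ℝ) * (t * s) ^ i := by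
      apply sum_le_sum_of_subset_of_nonneg
      · intro i hi
        simp only [mem_Icc] at hi
        exact mem_range.2 (Nat.lt_succ_of_le hi.2)
      · intro i _ _; positivity
    have hts : t * s = (b : ℝ) / a := by
      rw [hs_def]; field_simp
    have step3 : ∑ i ∈ range (a+1), (a.choose i : ℝ) * (t * s) ^ i = (t * s + 1) ^ a := by
      rw [add_pow]
      exact sum_congr rfl fun i _ => by ring
    have step4 : (t * s + 1) ^ a ≤ Real.exp 1 ^ b := by
      have h1 : t * s + 1 ≤ Real.exp (t * s) := by
        have := Real.add_one_le_exp (t * s); linarith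
      have h2 : (t * s + 1) ^ a ≤ Real.exp (t * s) ^ a := by
        apply pow_le_pow_left₀ (by positivity) h1
      have h3 : Real.exp (t * s) ^ a = Real.exp ((a : ℝ) * (t * s)) := by
        rw [← Real.exp_nat_mul]
      have h4 : (a : ℝ) * (t * s) = b := by
        rw [hts]; field_simp
      have h5 : Real.exp ((b:ℝ)) = Real.exp 1 ^ b := by
        rw [← Real.exp_nat_mul]; ring_nf
      calc (t * s + 1) ^ a ≤ Real.exp (t*s) ^ a := h2
        _ = Real.exp ((a:ℝ) * (t*s)) := h3
        _ = Real.exp b := by rw [h4]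
        _ = Real.exp 1 ^ b := h5
    linarith [step1, step2, step3.le, step4]
  have hsb : (0:ℝ) < s ^ b := by positivity
  have final : (∑ i ∈ Icc b a, (a.choose i : ℝ) * t ^ i) ≤ Real.exp 1 ^ b / s ^ b :=
    (le_div_iff₀ hsb).2 key
  calc (∑ i ∈ Icc b a, (a.choose i : ℝ) * t ^ i) ≤ Real.exp 1 ^ b / s ^ b := final
    _ = (Real.exp 1 / s) ^ b := (div_pow _ _ _).symm
    _ = (Real.exp 1 * a * q * (1 + x) / b) ^ b := by
        congr 1
        rw [hs_def, ht_def]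
        field_simp
end

section
/- For natural numbers d ≥ Λ ≥ 1 and any real q with 0 ≤ q ≤ 1, the weighted sum over the truncated frequency set satisfies ∑_{ω ∈ 𝔠(Λ)} q^{2‖ω‖₀} = ∑_{k=0}^{Λ} C(d,k)·2^k·q^{2k} ≤ (d·e^{2q²}/Λ)^Λ. -/
open Finset

lemma tail_bound (a b : ℕ) (hb : 1 ≤ b) (hba : b ≤ a) (y : ℝ) (hy : 0 ≤ y) :
    ∑ k ∈ Finset.range (b+1), (a.choose k : ℝ) * y ^ k ≤ ((a:ℝ) * Real.exp y / b) ^ b := by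
  have hb0 : 0 < (b:ℝ) := by exact_mod_cast hb
  have ha0 : 0 < (a:ℝ) := lt_of_lt_of_le hb0 (by exact_mod_cast hba)
  set r : ℝ := b / a with hr
  have hr0 : 0 < r := by positivity
  have hr1 : r ≤ 1 := by rw [hr, div_le_one ha0]; exact_mod_cast hba
  have key : (∑ k ∈ Finset.range (b+1), (a.choose k : ℝ) * y ^ k) * r ^ b
      ≤ (Real.exp y) ^ b := by
    have step1 : (∑ k ∈ Finset.range (b+1), (a.choose k : ℝ) * y ^ k) * r ^ b
        ≤ ∑ k ∈ Finset.range (b+1), (a.choose k : ℝ) * (y * r) ^ k := by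
      rw [Finset.sum_mul]
      apply Finset.sum_le_sum
      intro k hk
      have hkb : k ≤ b := by simpa [Nat.lt_succ_iff] using Finset.mem_range.1 hk
      have hrk : r ^ b ≤ r ^ k := pow_le_pow_of_le_one hr0.le hr1 hkb
      have hnn : 0 ≤ (a.choose k : ℝ) * y ^ k := by positivity
      calc (a.choose k : ℝ) * y ^ k * r ^ b ≤ (a.choose k : ℝ) * y ^ k * r ^ k :=
            mul_le_mul_of_nonneg_left hrk hnn
        _ = (a.choose k : ℝ) * (y * r) ^ k := by rw [mul_pow]; ring
    have step2 : ∑ k ∈ Finset.range (b+1), (a.choose k : ℝ) * (y * r) ^ k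
        ≤ ∑ k ∈ Finset.range (a+1), (a.choose k : ℝ) * (y * r) ^ k :=
      Finset.sum_le_sum_of_subset_of_nonneg
        (Finset.range_subset_range.2 (by omega)) (fun k _ _ => by positivity)
    have step3 : ∑ k ∈ Finset.range (a+1), (a.choose k : ℝ) * (y * r) ^ k
        = (1 + y * r) ^ a := by
      rw [show (1 + y * r) ^ a = (y * r + 1) ^ a by ring, add_pow]
      exact Finset.sum_congr rfl fun k _ => by rw [one_pow]; ring
    have step4 : (1 + y * r) ^ a ≤ (Real.exp (y * r)) ^ a := by
      apply pow_le_pow_left₀ (by positivity)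
      linarith [Real.add_one_le_exp (y * r)]
    have step5 : (Real.exp (y * r)) ^ a = (Real.exp y) ^ b := by
      rw [← Real.exp_nat_mul, ← Real.exp_nat_mul]
      congr 1
      rw [hr]
      field_simp
    calc _ ≤ _ := step1
      _ ≤ _ := step2
      _ = _ := step3
      _ ≤ _ := step4
      _ = _ := step5
  have hrpow : 0 < r ^ b := by positivity
  rw [show ((a:ℝ) * Real.exp y / b) ^ b = (Real.exp y) ^ b / r ^ b by
    rw [hr]
    field_simp
    have hX : (a:ℝ) ^ b * (a:ℝ)⁻¹ ^ b = 1 := by rw [← mul_pow, mul_inv_cancel₀ ha0.ne', one_pow]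
    have hY : (b:ℝ) ^ b * (b:ℝ)⁻¹ ^ b = 1 := by rw [← mul_pow, mul_inv_cancel₀ hb0.ne', one_pow]
    linear_combination (Real.exp y ^ b * ((b:ℝ) ^ b * (b:ℝ)⁻¹ ^ b)) * hX + Real.exp y ^ b * hY]
  rw [le_div_iff₀ hrpow]
  exact key

lemma count_support (d k : ℕ) :
    ((Finset.univ.filter fun ω : Fin d → ({-1, 0, 1} : Finset ℤ) =>
      (Finset.univ.filter fun i => (ω i : ℤ) ≠ 0).card = k)).card
    = d.choose k * 2 ^ k := by
  classical
  rw [Finset.card_eq_sum_card_fiberwise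
    (f := fun ω : Fin d → ({-1, 0, 1} : Finset ℤ) =>
      Finset.univ.filter fun i => (ω i : ℤ) ≠ 0)
    (t := Finset.univ.powersetCard k)
    (fun ω hω => Finset.mem_powersetCard.2 ⟨Finset.subset_univ _,
      (Finset.mem_filter.1 hω).2⟩)]
  have hfib : ∀ T ∈ (Finset.univ : Finset (Fin d)).powersetCard k,
      ((Finset.univ.filter fun ω : Fin d → ({-1, 0, 1} : Finset ℤ) =>
        (Finset.univ.filter fun i => (ω i : ℤ) ≠ 0).card = k).filter
        (fun ω => Finset.univ.filter (fun i => (ω i : ℤ) ≠ 0) = T)).card = 2 ^ k := by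
    intro T hT
    obtain ⟨-, hTc⟩ := Finset.mem_powersetCard.1 hT
    have hset : ((Finset.univ.filter fun ω : Fin d → ({-1, 0, 1} : Finset ℤ) =>
        (Finset.univ.filter fun i => (ω i : ℤ) ≠ 0).card = k).filter
        (fun ω => Finset.univ.filter (fun i => (ω i : ℤ) ≠ 0) = T))
        = Fintype.piFinset (fun i : Fin d =>
            if i ∈ T then ({⟨-1, by decide⟩, ⟨1, by decide⟩} :
              Finset ({-1, 0, 1} : Finset ℤ)) else {⟨0, by decide⟩}) := by
      ext ω
      simp only [Finset.mem_filter, Finset.mem_univ, true_and, Fintype.mem_piFinset]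
      constructor
      · rintro ⟨-, hsupp⟩ i
        by_cases hi : i ∈ T
        · have hne : (ω i : ℤ) ≠ 0 := by
            rw [← hsupp, Finset.mem_filter] at hi; exact hi.2
          have h2 := (ω i).2
          simp only [Finset.mem_insert, Finset.mem_singleton] at h2
          rw [if_pos hi]
          simp only [Finset.mem_insert, Finset.mem_singleton]
          rcases h2 with h | h | h
          · left; exact Subtype.ext h
          · exact absurd h hne
          · right; exact Subtype.ext h
        · have hz : (ω i : ℤ) = 0 := by
            by_contra hne
            exact hi (hsupp ▸ (Finset.mem_filter.2 ⟨Finset.mem_univ _, hne⟩))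
          rw [if_neg hi]
          simp only [Finset.mem_singleton]
          exact Subtype.ext hz
      · intro h
        have hsupp : Finset.univ.filter (fun i => (ω i : ℤ) ≠ 0) = T := by
          ext i
          simp only [Finset.mem_filter, Finset.mem_univ, true_and]
          constructor
          · intro hne
            by_contra hi
            have h' := h i
            rw [if_neg hi, Finset.mem_singleton] at h'
            exact hne (by rw [h'])
          · intro hi
            have h' := h i
            rw [if_pos hi] at h'
            simp only [Finset.mem_insert, Finset.mem_singleton] at h'
            rcases h' with h' | h' <;> rw [h'] <;> decide
        exact ⟨by rw [hsupp, hTc], hsupp⟩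
    rw [hset, Fintype.card_piFinset]
    have : ∀ i : Fin d, (if i ∈ T then ({⟨-1, by decide⟩, ⟨1, by decide⟩} :
        Finset ({-1, 0, 1} : Finset ℤ)) else {⟨0, by decide⟩}).card
        = if i ∈ T then 2 else 1 := by
      intro i
      by_cases hi : i ∈ T <;> simp [hi]
    rw [Finset.prod_congr rfl (fun i _ => this i)]
    rw [Finset.prod_ite_mem]
    simp [hTc]
  rw [Finset.sum_congr rfl hfib, Finset.sum_const, Finset.card_powersetCard,
    Finset.card_univ, Fintype.card_fin, smul_eq_mul]


theorem truncated_frequency_weighted_sum (d Λ : ℕ) (hΛ : 1 ≤ Λ) (hd : Λ ≤ d)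
    (q : ℝ) (hq0 : 0 ≤ q) (hq1 : q ≤ 1) :
    (∑ ω ∈ Finset.univ.filter (fun ω : Fin d → ({-1, 0, 1} : Finset ℤ) =>
        (Finset.univ.filter fun i => (ω i : ℤ) ≠ 0).card ≤ Λ),
        q ^ (2 * (Finset.univ.filter fun i => (ω i : ℤ) ≠ 0).card))
      = ∑ k ∈ Finset.range (Λ + 1), (d.choose k : ℝ) * 2 ^ k * q ^ (2 * k) ∧
    ∑ k ∈ Finset.range (Λ + 1), (d.choose k : ℝ) * 2 ^ k * q ^ (2 * k) ≤
      ((d : ℝ) * Real.exp (2 * q ^ 2) / Λ) ^ Λ := by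
  constructor
  · rw [← Finset.sum_fiberwise_of_maps_to
      (g := fun ω : Fin d → ({-1, 0, 1} : Finset ℤ) =>
        (Finset.univ.filter fun i => (ω i : ℤ) ≠ 0).card)
      (t := Finset.range (Λ + 1))
      (fun ω hω => Finset.mem_range.2 (Nat.lt_succ_of_le (Finset.mem_filter.1 hω).2))]
    apply Finset.sum_congr rfl
    intro k hk
    have hkΛ : k ≤ Λ := Nat.lt_succ_iff.1 (Finset.mem_range.1 hk)
    have hfilter : ((Finset.univ.filter fun ω : Fin d → ({-1, 0, 1} : Finset ℤ) =>
        (Finset.univ.filter fun i => (ω i : ℤ) ≠ 0).card ≤ Λ).filter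
        fun ω => (Finset.univ.filter fun i => (ω i : ℤ) ≠ 0).card = k)
        = Finset.univ.filter fun ω : Fin d → ({-1, 0, 1} : Finset ℤ) =>
            (Finset.univ.filter fun i => (ω i : ℤ) ≠ 0).card = k := by
      rw [Finset.filter_filter]
      apply Finset.filter_congr
      intro ω _
      constructor
      · exact fun h => h.2
      · exact fun h => ⟨h ▸ hkΛ, h⟩
    rw [hfilter,
      Finset.sum_congr rfl (fun ω hω => by rw [(Finset.mem_filter.1 hω).2]),
      Finset.sum_const, count_support, nsmul_eq_mul]
    push_cast
    ring
  · have h := tail_bound d Λ hΛ hd (2 * q ^ 2) (by positivity)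
    calc ∑ k ∈ Finset.range (Λ + 1), (d.choose k : ℝ) * 2 ^ k * q ^ (2 * k)
        = ∑ k ∈ Finset.range (Λ + 1), (d.choose k : ℝ) * (2 * q ^ 2) ^ k := by
          apply Finset.sum_congr rfl
          intro k _
          rw [pow_mul, mul_pow]
          ring
      _ ≤ _ := h
end

section
/- Let d, Λ be natural numbers with Λ + 1 ≤ d, and let q, R, B > 0 be reals satisfying q(1+R) ≤ (Λ+1)/d. Then B · ∑_{a=Λ+1}^{d} ∑_{b=0}^{a} C(d,a)·C(a,b)·q^a·R^b ≤ B·(e·d·q·(1+R)/(Λ+1))^{Λ+1}. -/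
theorem truncation_error_bound (d Λ : ℕ) (hΛd : Λ + 1 ≤ d) (q R B : ℝ)
    (hq : 0 < q) (hR : 0 < R) (hB : 0 < B)
    (h : q * (1 + R) ≤ ((Λ : ℝ) + 1) / d) :
    B * ∑ a ∈ Finset.Icc (Λ + 1) d, ∑ b ∈ Finset.range (a + 1),
        (d.choose a : ℝ) * (a.choose b : ℝ) * q ^ a * R ^ b
      ≤ B * (Real.exp 1 * d * q * (1 + R) / ((Λ : ℝ) + 1)) ^ (Λ + 1) := by
  have hdpos : 0 < d := lt_of_lt_of_le (Nat.succ_pos Λ) hΛd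
  have hd : (0:ℝ) < d := by exact_mod_cast hdpos
  set y : ℝ := q * (1 + R) with hy
  have hy0 : 0 < y := by positivity
  set K : ℝ := (Λ : ℝ) + 1 with hK
  have hK0 : 0 < K := by positivity
  have hyd : y * d ≤ K := by
    have := mul_le_mul_of_nonneg_right h hd.le
    rwa [div_mul_cancel₀ _ hd.ne'] at this
  set t : ℝ := K / (y * d) with ht
  have ht0 : 0 < t := by positivity
  have ht1 : 1 ≤ t := (one_le_div (by positivity)).2 hyd
  have htyd : t * y * d = K := by
    rw [ht]; field_simp
  clear_value y K t
  have hinner : ∀ a, ∑ b ∈ Finset.range (a+1),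
      (d.choose a : ℝ) * (a.choose b : ℝ) * q ^ a * R ^ b
      = (d.choose a : ℝ) * y ^ a := by
    intro a
    have hap := add_pow R 1 a
    simp only [one_pow, mul_one] at hap
    rw [hy, mul_pow, show (1+R)^a = (R+1)^a by ring_nf, hap, Finset.mul_sum,
      Finset.mul_sum]
    exact Finset.sum_congr rfl fun b _ => by ring
  rw [Finset.sum_congr rfl (fun a _ => hinner a)]
  apply mul_le_mul_of_nonneg_left _ hB.le
  have step1 : ∑ a ∈ Finset.Icc (Λ + 1) d, (d.choose a : ℝ) * y ^ a
      ≤ ∑ a ∈ Finset.Icc (Λ + 1) d, (d.choose a : ℝ) * (t*y) ^ a / t ^ (Λ+1) := by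
    apply Finset.sum_le_sum
    intro a ha
    have haΛ : Λ + 1 ≤ a := (Finset.mem_Icc.mp ha).1
    rw [le_div_iff₀ (by positivity)]
    have htt : t ^ (Λ+1) ≤ t ^ a := pow_le_pow_right₀ ht1 haΛ
    calc (d.choose a : ℝ) * y ^ a * t ^ (Λ+1)
        ≤ (d.choose a : ℝ) * y ^ a * t ^ a := by
          apply mul_le_mul_of_nonneg_left htt (by positivity)
      _ = (d.choose a : ℝ) * (t*y) ^ a := by ring
  have step2 : ∑ a ∈ Finset.Icc (Λ + 1) d, (d.choose a : ℝ) * (t*y) ^ a / t ^ (Λ+1)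
      ≤ (1 + t*y) ^ d / t ^ (Λ+1) := by
    rw [← Finset.sum_div]
    apply div_le_div_of_nonneg_right ?_ (by positivity) |>.trans_eq rfl
    have hap := add_pow (t*y) 1 d
    simp only [one_pow, mul_one] at hap
    have hap2 : ((t*y)+1)^d = ∑ x ∈ Finset.range (d+1), (d.choose x:ℝ) * (t*y)^x := by
      rw [hap]; exact Finset.sum_congr rfl fun _ _ => mul_comm _ _
    rw [show (1 + t*y)^d = (t*y+1)^d by ring_nf, hap2]
    apply Finset.sum_le_sum_of_subset_of_nonneg
    · intro a ha
      simp only [Finset.mem_Icc] at ha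
      simp [Nat.lt_succ_iff, ha.2]
    · intro a _ _; positivity
  have step3 : (1 + t*y) ^ d / t ^ (Λ+1) ≤ Real.exp K / t ^ (Λ+1) := by
    apply div_le_div_of_nonneg_right ?_ (by positivity) |>.trans_eq rfl
    calc (1 + t*y) ^ d ≤ (Real.exp (t*y)) ^ d := by
          apply pow_le_pow_left₀ (by positivity)
          linarith [Real.add_one_le_exp (t*y)]
      _ = Real.exp (t * y * d) := by
          rw [← Real.exp_nat_mul]; ring_nf
      _ = Real.exp K := by rw [htyd]
  have step4 : Real.exp K / t ^ (Λ+1)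
      = (Real.exp 1 * d * q * (1 + R) / K) ^ (Λ+1) := by
    have hexp : Real.exp K = (Real.exp 1) ^ (Λ+1) := by
      rw [← Real.exp_nat_mul]
      norm_num [hK]
    rw [hexp, ← div_pow]
    congr 1
    rw [ht, hy]
    field_simp
  calc ∑ a ∈ Finset.Icc (Λ + 1) d, (d.choose a : ℝ) * y ^ a
      ≤ (1 + t*y) ^ d / t ^ (Λ+1) := step1.trans step2
    _ ≤ Real.exp K / t ^ (Λ+1) := step3
    _ = _ := step4
end
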